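/- Let H be a biconnected graph and let G be a graph containing H as a minor. Then for every minimal minor model φ of H in G, the induced subgraph G[φ(V(H))] is biconnected; furthermore, G[φ(V(H))] is a minor of some biconnected component of G. -/

import Mathlib

/-- `φ` is a minor model of `H` in `G`: branch sets are connected (hence nonempty) and
pairwise disjoint, and every edge of `H` is realized by an edge of `G` between the
corresponding branch sets. -/
def IsMinorModel {V W : Type} (G : SimpleGraph V) (H : SimpleGraph W) (φ : W → Set V) :
    Prop :=
  (∀ w : W, (G.induce (φ w)).Connected) ∧
  (∀ w₁ w₂ : W, w₁ ≠ w₂ → Disjoint (φ w₁) (φ w₂)) ∧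
  (∀ w₁ w₂ : W, H.Adj w₁ w₂ → ∃ x ∈ φ w₁, ∃ y ∈ φ w₂, G.Adj x y)

/-- `H` is a minor of `G`. -/
def IsMinorOf {W V : Type} (H : SimpleGraph W) (G : SimpleGraph V) : Prop :=
  ∃ φ : W → Set V, IsMinorModel G H φ
/-- A graph is biconnected if it is connected and remains connected after deleting any
single vertex. -/
def IsBiconnected {W : Type} (H : SimpleGraph W) : Prop :=
  H.Connected ∧ ∀ w : W, (H.induce {u : W | u ≠ w}).Connected

namespace Stmt11Aux

open SimpleGraph

variable {α : Type}

/-- Reachability inside a vertex set `s`. -/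
def ReachIn (G : SimpleGraph α) (s : Set α) (a b : α) : Prop :=
  Relation.ReflTransGen (fun p q => p ∈ s ∧ q ∈ s ∧ G.Adj p q) a b

lemma ReachIn.mono {G : SimpleGraph α} {s t : Set α} (h : s ⊆ t) {a b : α}
    (hr : ReachIn G s a b) : ReachIn G t a b :=
  Relation.ReflTransGen.mono (r := fun p q => p ∈ s ∧ q ∈ s ∧ G.Adj p q)
    (p := fun p q => p ∈ t ∧ q ∈ t ∧ G.Adj p q) (fun p q hpq => ⟨h hpq.1, h hpq.2.1, hpq.2.2⟩) a b hr

lemma ReachIn.symm {G : SimpleGraph α} {s : Set α} {a b : α} (hr : ReachIn G s a b) :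
    ReachIn G s b a :=
  by
    haveI : Std.Symm (fun p q : α => p ∈ s ∧ q ∈ s ∧ G.Adj p q) :=
      ⟨fun p q hpq => ⟨hpq.2.1, hpq.1, hpq.2.2.symm⟩⟩
    exact (Relation.ReflTransGen.symmetric (r := fun p q : α => p ∈ s ∧ q ∈ s ∧ G.Adj p q)).symm _ _ hr

lemma ReachIn.trans {G : SimpleGraph α} {s : Set α} {a b c : α} (h₁ : ReachIn G s a b)
    (h₂ : ReachIn G s b c) : ReachIn G s a c :=
  Relation.ReflTransGen.trans h₁ h₂

lemma ReachIn.mem_right {G : SimpleGraph α} {s : Set α} {a b : α}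
    (hr : ReachIn G s a b) (ha : a ∈ s) : b ∈ s := by
  induction hr with
  | refl => exact ha
  | tail _ hstep _ => exact hstep.2.1

lemma reachIn_of_walk {G : SimpleGraph α} {s : Set α} :
    ∀ {x y : ↥s}, (G.induce s).Walk x y → ReachIn G s x.1 y.1 := by
  intro x y p
  induction p with
  | nil => exact Relation.ReflTransGen.refl
  | @cons u v w h p ih => exact Relation.ReflTransGen.head ⟨u.2, v.2, h⟩ ih

lemma reachIn_of_connected {G : SimpleGraph α} {s : Set α}
    (h : (G.induce s).Connected) : ∀ a ∈ s, ∀ b ∈ s, ReachIn G s a b := by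
  intro a ha b hb
  obtain ⟨p⟩ := h.preconnected ⟨a, ha⟩ ⟨b, hb⟩
  exact reachIn_of_walk p

lemma reachable_induce_of_reachIn {G : SimpleGraph α} {s : Set α} {a b : α}
    (h : ReachIn G s a b) :
    ∀ (ha : a ∈ s) (hb : b ∈ s), (G.induce s).Reachable ⟨a, ha⟩ ⟨b, hb⟩ := by
  induction h with
  | refl => intro ha hb; exact Reachable.refl _
  | tail hab hstep ih =>
      intro ha hb
      exact (ih ha hstep.1).trans (SimpleGraph.Adj.reachable (by exact hstep.2.2))

lemma connected_induce_of_reachIn {G : SimpleGraph α} {s : Set α} (hne : s.Nonempty)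
    (h : ∀ a ∈ s, ∀ b ∈ s, ReachIn G s a b) : (G.induce s).Connected := by
  rw [connected_iff]
  refine ⟨fun x y => reachable_induce_of_reachIn (h x x.2 y y.2) x.2 y.2,
    ⟨⟨hne.choose, hne.choose_spec⟩⟩⟩

lemma reachIn_iUnion {W : Type} (G : SimpleGraph α) (H : SimpleGraph W) (ψ : W → Set α)
    (hloc : ∀ w, ∀ a ∈ ψ w, ∀ b ∈ ψ w, ReachIn G (ψ w) a b)
    (hedge : ∀ w₁ w₂, H.Adj w₁ w₂ → ∃ x ∈ ψ w₁, ∃ y ∈ ψ w₂, G.Adj x y)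
    (hpre : H.Preconnected) (w₁ w₂ : W) :
    ∀ a ∈ ψ w₁, ∀ b ∈ ψ w₂, ReachIn G (⋃ w, ψ w) a b := by
  obtain ⟨p⟩ := hpre w₁ w₂
  induction p with
  | nil =>
      intro a ha b hb
      exact (hloc _ a ha b hb).mono (Set.subset_iUnion ψ _)
  | @cons u v w h p ih =>
      intro a ha b hb
      obtain ⟨x, hx, y, hy, hxy⟩ := hedge _ _ h
      refine ((hloc u a ha x hx).mono (Set.subset_iUnion ψ u)).trans ?_
      exact Relation.ReflTransGen.head
        ⟨Set.mem_iUnion.2 ⟨u, hx⟩, Set.mem_iUnion.2 ⟨v, hy⟩, hxy⟩ (ih y hy b hb)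

lemma reachIn_avoid {G : SimpleGraph α} {s C : Set α} {v : α}
    (hclosed : ∀ c ∈ C, ∀ z ∈ s, G.Adj c z → z ∈ C ∨ z = v) :
    ∀ {y : α}, ReachIn G s y v → y ∉ C → ReachIn G (s \ C) y v := by
  intro y h
  induction h using Relation.ReflTransGen.head_induction_on with
  | refl => intro _; exact Relation.ReflTransGen.refl
  | @head p q hstep hrest ih =>
      intro hp
      by_cases hq : q ∈ C
      · rcases hclosed q hq p hstep.1 hstep.2.2.symm with hc | hv
        · exact absurd hc hp
        · subst hv; exact Relation.ReflTransGen.refl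
      · exact Relation.ReflTransGen.head
          ⟨⟨hstep.1, hp⟩, ⟨hstep.2.1, hq⟩, hstep.2.2⟩ (ih hq)

lemma reachIn_induce_lift {G : SimpleGraph α} {s : Set α} {t : Set ↥s} {x y : α}
    (h : ReachIn G (Subtype.val '' t) x y) :
    ∀ (x' : ↥s), x' ∈ t → x'.1 = x → ∀ (y' : ↥s), y' ∈ t → y'.1 = y →
      ReachIn (G.induce s) t x' y' := by
  induction h using Relation.ReflTransGen.head_induction_on with
  | refl =>
      intro x' hx' hxx y' hy' hyy
      have hxy : x' = y' := Subtype.ext (hxx.trans hyy.symm)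
      subst hxy
      exact Relation.ReflTransGen.refl
  | @head p q hstep hrest ih =>
      intro x' hx' hxx y' hy' hyy
      obtain ⟨q', hq't, hq'⟩ := hstep.2.1
      refine Relation.ReflTransGen.head ⟨hx', hq't, ?_⟩ (ih q' hq't hq' y' hy' hyy)
      show G.Adj x'.1 q'.1
      rw [hxx, hq']
      exact hstep.2.2

lemma connected_induce_singleton (Γ : SimpleGraph α) (z : α) :
    (Γ.induce {z}).Connected := by
  rw [connected_iff]
  refine ⟨?_, ⟨⟨z, rfl⟩⟩⟩
  rintro ⟨a, ha⟩ ⟨b, hb⟩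
  have hab : a = b := by
    rw [Set.mem_singleton_iff] at ha hb; rw [ha, hb]
  subst hab
  exact Reachable.refl _

end Stmt11Aux

open Stmt11Aux SimpleGraph

theorem stmt11 (V W : Type) [Fintype V] [Fintype W]
    (G : SimpleGraph V) (H : SimpleGraph W) (hH : IsBiconnected H)
    (φ : W → Set V) (hφ : IsMinorModel G H φ)
    (hmin : ∀ φ' : W → Set V, IsMinorModel G H φ' →
      ¬ (⋃ w : W, φ' w) ⊂ (⋃ w : W, φ w)) :
    IsBiconnected (G.induce (⋃ w : W, φ w)) ∧
    ∃ B : G.Subgraph, IsBiconnected B.coe ∧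
      (∀ B' : G.Subgraph, B ≤ B' → IsBiconnected B'.coe → B' = B) ∧
      IsMinorOf (G.induce (⋃ w : W, φ w)) B.coe := by
  classical
  obtain ⟨hconn, hdisj, hadj⟩ := hφ
  set S : Set V := ⋃ w, φ w with hSdef
  have hWne : Nonempty W := hH.1.nonempty
  have hφne : ∀ w, (φ w).Nonempty := fun w =>
    Set.nonempty_coe_sort.mp (hconn w).nonempty
  have hloc : ∀ w, ∀ a ∈ φ w, ∀ b ∈ φ w, ReachIn G (φ w) a b :=
    fun w => reachIn_of_connected (hconn w)
  -- Part 1: connectivity of `G.induce S`.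
  have hSconn : (G.induce S).Connected := by
    apply connected_induce_of_reachIn
    · obtain ⟨w⟩ := hWne
      exact ⟨(hφne w).choose, Set.mem_iUnion.2 ⟨w, (hφne w).choose_spec⟩⟩
    · intro a ha b hb
      obtain ⟨w₁, ha⟩ := Set.mem_iUnion.mp ha
      obtain ⟨w₂, hb⟩ := Set.mem_iUnion.mp hb
      exact reachIn_iUnion G H φ hloc hadj hH.1.preconnected w₁ w₂ a ha b hb
  -- Part 2: reachability after deleting any single vertex.
  have key : ∀ v : ↥S, ∀ a ∈ S \ {v.1}, ∀ b ∈ S \ {v.1}, ReachIn G (S \ {v.1}) a b := by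
    intro v
    obtain ⟨w₀, hvw₀⟩ := Set.mem_iUnion.mp v.2
    have hW'conn := hH.2 w₀
    have hW'ne : Nonempty ↥{u : W | u ≠ w₀} := hW'conn.nonempty
    set T : Set V := ⋃ u : ↥{u : W | u ≠ w₀}, φ u.1 with hTdef
    have hTreach : ∀ a ∈ T, ∀ b ∈ T, ReachIn G T a b := by
      intro a ha b hb
      obtain ⟨u₁, ha⟩ := Set.mem_iUnion.mp ha
      obtain ⟨u₂, hb⟩ := Set.mem_iUnion.mp hb
      exact reachIn_iUnion G (H.induce {u : W | u ≠ w₀}) (fun u => φ u.1)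
        (fun u => hloc u.1) (fun u₁ u₂ h => hadj u₁.1 u₂.1 h)
        hW'conn.preconnected u₁ u₂ a ha b hb
    have hTsub : T ⊆ S \ {v.1} := by
      intro x hx
      obtain ⟨u, hxu⟩ := Set.mem_iUnion.mp hx
      refine ⟨Set.mem_iUnion.2 ⟨u.1, hxu⟩, fun hxv => ?_⟩
      rw [Set.mem_singleton_iff] at hxv
      exact Set.disjoint_left.mp (hdisj u.1 w₀ u.2) hxu (hxv ▸ hvw₀)
    have hsub' : φ w₀ \ {v.1} ⊆ S \ {v.1} :=
      fun y hy => ⟨Set.mem_iUnion.2 ⟨w₀, hy.1⟩, hy.2⟩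
    -- Main claim via minimality: every vertex of `φ w₀ \ {v}` reaches `T`.
    have hclaim : ∀ x ∈ φ w₀, x ≠ v.1 → ∃ t ∈ T, ReachIn G (S \ {v.1}) x t := by
      intro x hx hxv
      by_contra hno
      push_neg at hno
      set C : Set V := {y | ReachIn G (φ w₀ \ {v.1}) x y} with hCdef
      have hxmem : x ∈ φ w₀ \ {v.1} := ⟨hx, hxv⟩
      have hxC : x ∈ C := Relation.ReflTransGen.refl
      have hCsub : C ⊆ φ w₀ \ {v.1} := fun y hy => ReachIn.mem_right hy hxmem
      have hCnoedge : ∀ c ∈ C, ∀ w', w' ≠ w₀ → ∀ z ∈ φ w', ¬ G.Adj c z := by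
        intro c hc w' hw' z hz hcz
        have hzT : z ∈ T := Set.mem_iUnion.2 ⟨⟨w', hw'⟩, hz⟩
        refine hno z hzT ?_
        exact Relation.ReflTransGen.tail (ReachIn.mono hsub' hc)
          ⟨hsub' (hCsub hc), hTsub hzT, hcz⟩
      set φ' : W → Set V := fun w => if w = w₀ then φ w₀ \ C else φ w with hφ'def
      have hφ'sub : ∀ w, φ' w ⊆ φ w := by
        intro w
        by_cases h : w = w₀ <;> simp [hφ'def, h, Set.diff_subset]
      have hvC : v.1 ∉ C := fun hvC => (hCsub hvC).2 rfl
      have hclosed : ∀ c ∈ C, ∀ z ∈ φ w₀, G.Adj c z → z ∈ C ∨ z = v.1 := by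
        intro c hc z hz hczadj
        by_cases hzv : z = v.1
        · exact Or.inr hzv
        · exact Or.inl (Relation.ReflTransGen.tail hc ⟨hCsub hc, ⟨hz, hzv⟩, hczadj⟩)
      have hφ'model : IsMinorModel G H φ' := by
        refine ⟨?_, ?_, ?_⟩
        · intro w
          by_cases h : w = w₀
          · have hw₀eq : φ' w = φ w₀ \ C := by simp [hφ'def, h]
            rw [hw₀eq]
            have hvmem : v.1 ∈ φ w₀ \ C := ⟨hvw₀, hvC⟩
            have hreachv : ∀ y ∈ φ w₀ \ C, ReachIn G (φ w₀ \ C) y v.1 := by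
              intro y hy
              exact reachIn_avoid hclosed (hloc w₀ y hy.1 v.1 hvw₀) hy.2
            apply connected_induce_of_reachIn ⟨v.1, hvmem⟩
            intro a ha b hb
            exact (hreachv a ha).trans (hreachv b hb).symm
          · have : φ' w = φ w := by simp [hφ'def, h]
            rw [this]; exact hconn w
        · intro w₁ w₂ hne
          exact Disjoint.mono (hφ'sub w₁) (hφ'sub w₂) (hdisj w₁ w₂ hne)
        · intro w₁ w₂ h
          obtain ⟨p, hp, q, hq, hpq⟩ := hadj w₁ w₂ h
          have hne := h.ne
          refine ⟨p, ?_, q, ?_, hpq⟩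
          · by_cases h1 : w₁ = w₀
            · subst h1
              have hpC : p ∉ C := fun hpC =>
                hCnoedge p hpC w₂ (fun hw => hne hw.symm) q hq hpq
              simp [hφ'def, hp, hpC]
            · simpa [hφ'def, h1] using hp
          · by_cases h2 : w₂ = w₀
            · subst h2
              have hqC : q ∉ C := fun hqC =>
                hCnoedge q hqC w₁ (fun hw => hne hw) p hp hpq.symm
              simp [hφ'def, hq, hqC]
            · simpa [hφ'def, h2] using hq
      refine hmin φ' hφ'model ?_
      refine (Set.ssubset_iff_of_subset (Set.iUnion_mono hφ'sub)).mpr ?_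
      refine ⟨x, Set.mem_iUnion.2 ⟨w₀, hx⟩, fun hx' => ?_⟩
      obtain ⟨w, hxw⟩ := Set.mem_iUnion.mp hx'
      by_cases h : w = w₀
      · subst h
        have : φ' w = φ w \ C := by simp [hφ'def]
        rw [this] at hxw
        exact hxw.2 hxC
      · have : φ' w = φ w := by simp [hφ'def, h]
        rw [this] at hxw
        exact Set.disjoint_left.mp (hdisj w w₀ h) hxw hx
    have hreachT : ∀ a ∈ S \ {v.1}, ∃ t ∈ T, ReachIn G (S \ {v.1}) a t := by
      rintro a ⟨haS, hav⟩
      obtain ⟨w, haw⟩ := Set.mem_iUnion.mp haS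
      by_cases hww : w = w₀
      · subst hww
        exact hclaim a haw (by simpa using hav)
      · exact ⟨a, Set.mem_iUnion.2 ⟨⟨w, hww⟩, haw⟩, Relation.ReflTransGen.refl⟩
    intro a ha b hb
    obtain ⟨ta, htaT, hra⟩ := hreachT a ha
    obtain ⟨tb, htbT, hrb⟩ := hreachT b hb
    exact hra.trans (((hTreach ta htaT tb htbT).mono hTsub).trans hrb.symm)
  -- Biconnectivity of `G.induce S`.
  have hSbicon : IsBiconnected (G.induce S) := by
    refine ⟨hSconn, fun v => ?_⟩
    have himg : (Subtype.val '' {u : ↥S | u ≠ v}) = S \ {v.1} := by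
      ext x
      constructor
      · rintro ⟨u, hu, rfl⟩
        exact ⟨u.2, fun h => hu (Subtype.ext (by simpa using h))⟩
      · rintro ⟨hxS, hxv⟩
        exact ⟨⟨x, hxS⟩, fun h => hxv (by simpa using congrArg Subtype.val h), rfl⟩
    apply connected_induce_of_reachIn
    · obtain ⟨w₀, hvw₀⟩ := Set.mem_iUnion.mp v.2
      obtain ⟨u⟩ := (hH.2 w₀).nonempty
      obtain ⟨y, hy⟩ := hφne u.1
      have hyS : y ∈ S := Set.mem_iUnion.2 ⟨u.1, hy⟩
      refine ⟨⟨y, hyS⟩, fun h => ?_⟩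
      have hyv : y = v.1 := congrArg Subtype.val h
      exact Set.disjoint_left.mp (hdisj u.1 w₀ u.2) hy (hyv ▸ hvw₀)
    · intro a ha b hb
      have hamem : a.1 ∈ Subtype.val '' {u : ↥S | u ≠ v} := ⟨a, ha, rfl⟩
      have hbmem : b.1 ∈ Subtype.val '' {u : ↥S | u ≠ v} := ⟨b, hb, rfl⟩
      have hreach := key v a.1 (himg ▸ hamem) b.1 (himg ▸ hbmem)
      rw [← himg] at hreach
      exact reachIn_induce_lift hreach a ha rfl b hb rfl
  refine ⟨hSbicon, ?_⟩
  -- The induced subgraph on `S` as a subgraph of `G`.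
  set B₀ : G.Subgraph :=
    ⟨S, fun a b => a ∈ S ∧ b ∈ S ∧ G.Adj a b, fun h => h.2.2, fun h => h.1,
      ⟨fun a b h => ⟨h.2.1, h.1, h.2.2.symm⟩⟩⟩ with hB₀def
  have hB₀coe : B₀.coe = G.induce S := by
    ext a b
    show (a.1 ∈ S ∧ b.1 ∈ S ∧ G.Adj a.1 b.1) ↔ G.Adj a.1 b.1
    exact ⟨fun h => h.2.2, fun h => ⟨a.2, b.2, h⟩⟩
  have hB₀bi : IsBiconnected B₀.coe := hB₀coe ▸ hSbicon
  haveI : Finite G.Subgraph :=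
    Finite.of_injective (fun B => (B.verts, B.Adj))
      (fun B1 B2 h =>
        SimpleGraph.Subgraph.ext (congrArg Prod.fst h) (congrArg Prod.snd h))
  obtain ⟨B, hBmem, hBmax⟩ :=
    Set.Finite.exists_maximalFor id
      {B : G.Subgraph | IsBiconnected B.coe ∧ B₀ ≤ B} (Set.toFinite _)
      ⟨B₀, hB₀bi, le_rfl⟩
  refine ⟨B, hBmem.1, ?_, ?_⟩
  · intro B' hBB' hB'bi
    exact le_antisymm (hBmax ⟨hB'bi, hBmem.2.trans hBB'⟩ hBB') hBB'
  · have hSB : S ⊆ B.verts := hBmem.2.1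
    refine ⟨fun u => {⟨u.1, hSB u.2⟩}, ?_, ?_, ?_⟩
    · intro u
      exact connected_induce_singleton _ _
    · intro u₁ u₂ hne
      rw [Set.disjoint_singleton]
      intro h
      apply hne
      apply Subtype.ext
      exact Subtype.mk_eq_mk.mp h
    · intro u₁ u₂ hadj'
      exact ⟨_, rfl, _, rfl, hBmem.2.2 ⟨u₁.2, u₂.2, hadj'⟩⟩
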